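/- Let k ∈ ℕ and let Γ, Γ' be discrete subgroups of ℝ^k with Γ ⊆ Γ' and rk(Γ') = rk(Γ) + 1, and let v ∈ Γ' \ Γ_ℝ. Then the covolume satisfies ‖Γ'‖ ≤ ‖Γ‖ · ‖v‖ whenever Γ' = Γ + ℤv, where ‖Γ‖ denotes the volume of Γ_ℝ/Γ (with ‖{0}‖ = 1). (Submultiplicativity of covolume.) -/

import Mathlib

open Matrix

/-- The covolume of the discrete subgroup of `ℝ^k` with `ℤ`-basis `w : Fin j → ℝ^k`:
the square root of the Gram determinant (the volume of `Γ_ℝ/Γ`; for `j = 0` this is `1`). -/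
noncomputable def covolBasis {k j : ℕ} (w : Fin j → EuclideanSpace ℝ (Fin k)) : ℝ :=
  Real.sqrt (Matrix.det (Matrix.of fun a b : Fin j => (inner ℝ (w a) (w b) : ℝ)))

lemma gram_det_nonneg {k : ℕ} {ι : Type*} [Fintype ι] [DecidableEq ι]
    (u : ι → EuclideanSpace ℝ (Fin k)) :
    0 ≤ Matrix.det (Matrix.of fun a b : ι => (inner ℝ (u a) (u b) : ℝ)) := by
  have h : (Matrix.of fun a b : ι => (inner ℝ (u a) (u b) : ℝ)) =
      (Matrix.of fun (i : Fin k) (a : ι) => u a i)ᴴ *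
        (Matrix.of fun (i : Fin k) (a : ι) => u a i) := by
    ext a b
    simp [Matrix.mul_apply, PiLp.inner_apply, RCLike.inner_apply, Matrix.conjTranspose_apply]
    exact Finset.sum_congr rfl fun _ _ => mul_comm _ _
  have hps : Matrix.PosSemidef
      (Matrix.of fun a b : ι => (inner ℝ (u a) (u b) : ℝ)) := by
    rw [h]; exact Matrix.posSemidef_conjTranspose_mul_self _
  exact hps.det_nonneg

/-- Submultiplicativity of covolume: if `Γ` is a discrete subgroup of `ℝ^k` with `ℤ`-basis
`w : Fin j → ℝ^k` and `v ∉ Γ_ℝ`, so that `Γ' = Γ + ℤv` is a discrete subgroup with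
`rk(Γ') = rk(Γ) + 1` and `ℤ`-basis `w` followed by `v`, then `‖Γ'‖ ≤ ‖Γ‖ · ‖v‖`. -/
theorem covol_submultiplicative {k j : ℕ} (w : Fin j → EuclideanSpace ℝ (Fin k))
    (v : EuclideanSpace ℝ (Fin k)) (hw : LinearIndependent ℝ w)
    (hv : v ∉ Submodule.span ℝ (Set.range w)) :
    covolBasis (Fin.snoc w v) ≤ covolBasis w * ‖v‖ := by
  classical
  set K : Submodule ℝ (EuclideanSpace ℝ (Fin k)) := Submodule.span ℝ (Set.range w) with hK
  set p : EuclideanSpace ℝ (Fin k) := (K.orthogonalProjectionOnto v : EuclideanSpace ℝ (Fin k)) with hpdef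
  set q : EuclideanSpace ℝ (Fin k) := v - p with hqdef
  have hpmem : p ∈ K := by rw [hpdef]; exact (K.orthogonalProjectionOnto v).2
  have hqorth : q ∈ Kᗮ := by
    rw [hqdef, hpdef]; exact K.sub_starProjection_mem_orthogonal v
  have hqw : ∀ a : Fin j, (inner ℝ q (w a) : ℝ) = 0 := by
    intro a
    have : (inner ℝ (w a) q : ℝ) = 0 :=
      (Submodule.mem_orthogonal K q).mp hqorth (w a)
        (Submodule.subset_span ⟨a, rfl⟩)
    rwa [real_inner_comm] at this
  have hqp : (inner ℝ q p : ℝ) = 0 := by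
    rw [real_inner_comm]; exact (Submodule.mem_orthogonal K q).mp hqorth p hpmem
  have hvpq : v = p + q := by simp [hqdef]
  have hqv : (inner ℝ q v : ℝ) = ‖q‖ ^ 2 := by
    rw [hvpq, inner_add_right, hqp, real_inner_self_eq_norm_sq, zero_add]
  have hnq : ‖q‖ ≤ ‖v‖ := by
    have hpyth : ‖v‖ ^ 2 = ‖p‖ ^ 2 + ‖q‖ ^ 2 := by
      rw [hvpq, norm_add_sq_real, real_inner_comm, hqp]; ring
    nlinarith [norm_nonneg q, norm_nonneg v, norm_nonneg p]
  -- the Gram matrix over the sum type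
  set u : Fin j ⊕ Fin 1 → EuclideanSpace ℝ (Fin k) := Sum.elim w (fun _ => v) with hu
  set M : Matrix (Fin j ⊕ Fin 1) (Fin j ⊕ Fin 1) ℝ :=
    Matrix.of (fun a b => (inner ℝ (u a) (u b) : ℝ)) with hM
  set G : Matrix (Fin j) (Fin j) ℝ :=
    Matrix.of (fun a b => (inner ℝ (w a) (w b) : ℝ)) with hG
  have hsnoc : ∀ x : Fin j ⊕ Fin 1, Fin.snoc (α := fun _ => EuclideanSpace ℝ (Fin k)) w v (finSumFinEquiv x) = u x := by
    rintro (a | b)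
    · show Fin.snoc (α := fun _ => EuclideanSpace ℝ (Fin k)) w v (Fin.castSucc a) = w a
      rw [Fin.snoc_castSucc]
    · have : finSumFinEquiv (Sum.inr b) = Fin.last j := by
        apply Fin.ext
        simp [Fin.last, Subsingleton.elim b 0]
      rw [this, Fin.snoc_last]
      simp [hu, Subsingleton.elim b 0]
  have hdet_eq : Matrix.det
      (Matrix.of fun a b : Fin (j + 1) => (inner ℝ (Fin.snoc (α := fun _ => EuclideanSpace ℝ (Fin k)) w v a) (Fin.snoc (α := fun _ => EuclideanSpace ℝ (Fin k)) w v b) : ℝ)) =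
      M.det := by
    rw [← Matrix.det_submatrix_equiv_self finSumFinEquiv]
    congr 1
    ext a b
    simp [Matrix.submatrix_apply, hsnoc, hM]
  -- decompose the last row
  have hrow : M (Sum.inr 0) = (fun x => (inner ℝ p (u x) : ℝ)) + fun x => (inner ℝ q (u x) : ℝ) := by
    funext x
    simp only [hM, Matrix.of_apply, hu, Sum.elim_inr, Pi.add_apply]
    rw [hvpq, inner_add_left]
  have hdetM : M.det = G.det * ‖q‖ ^ 2 := by
    have h1 : M = M.updateRow (Sum.inr 0)
        ((fun x => (inner ℝ p (u x) : ℝ)) + fun x => (inner ℝ q (u x) : ℝ)) := by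
      rw [← hrow, Matrix.updateRow_eq_self]
    have h2 : (M.updateRow (Sum.inr 0) (fun x => (inner ℝ p (u x) : ℝ))).det = 0 := by
      obtain ⟨c, hc⟩ := (Submodule.mem_span_range_iff_exists_fun ℝ).mp hpmem
      have hrow1 : (fun x => (inner ℝ p (u x) : ℝ)) =
          ∑ i : Fin j ⊕ Fin 1, Sum.elim c (0 : Fin 1 → ℝ) i • M i := by
        funext x
        rw [← hc, sum_inner]
        simp [Fintype.sum_sum_type, hM, real_inner_smul_left, hu, PiLp.inner_apply,
          RCLike.inner_apply, Finset.mul_sum, mul_assoc]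
        exact Finset.sum_congr rfl fun _ _ => Finset.sum_congr rfl fun _ _ => by ring
      rw [hrow1, Matrix.det_updateRow_sum]
      simp
    have h3 : (M.updateRow (Sum.inr 0) (fun x => (inner ℝ q (u x) : ℝ))).det =
        G.det * ‖q‖ ^ 2 := by
      have hblock : M.updateRow (Sum.inr 0) (fun x => (inner ℝ q (u x) : ℝ)) =
          Matrix.fromBlocks G (Matrix.of fun a (_ : Fin 1) => (inner ℝ (w a) v : ℝ)) 0
            (Matrix.of fun (_ : Fin 1) (_ : Fin 1) => (‖q‖ ^ 2 : ℝ)) := by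
        ext i x
        rcases i with a | b'
        · rw [Matrix.updateRow_ne (by simp)]
          rcases x with b | b <;> simp [hM, hu, hG, PiLp.inner_apply, RCLike.inner_apply]
        · have hb' : b' = 0 := Subsingleton.elim _ _
          subst hb'
          rw [Matrix.updateRow_self]
          rcases x with b | b
          · simp [hu, hqw]
          · have hb : b = 0 := Subsingleton.elim _ _
            subst hb
            simp [hu, hqv]
      rw [hblock, Matrix.det_fromBlocks_zero₂₁, Matrix.det_fin_one]
      simp
    calc M.det = (M.updateRow (Sum.inr 0)
          ((fun x => (inner ℝ p (u x) : ℝ)) + fun x => (inner ℝ q (u x) : ℝ))).det := by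
            rw [← h1]
      _ = (M.updateRow (Sum.inr 0) (fun x => (inner ℝ p (u x) : ℝ))).det +
          (M.updateRow (Sum.inr 0) (fun x => (inner ℝ q (u x) : ℝ))).det :=
            Matrix.det_updateRow_add _ _ _ _
      _ = G.det * ‖q‖ ^ 2 := by rw [h2, h3, zero_add]
  have hGnn : 0 ≤ G.det := gram_det_nonneg w
  rw [covolBasis, covolBasis, hdet_eq, hdetM, Real.sqrt_mul hGnn, Real.sqrt_sq (norm_nonneg q)]
  exact mul_le_mul_of_nonneg_left hnq (Real.sqrt_nonneg _)
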